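/- In the space X = ℓ1 equipped with its weak topology σ(ℓ1, ℓ∞), the canonical basis sequence (e_n) contains neither a weakly Cauchy subsequence nor a subsequence which is an ℓ1-sequence of the topological vector space (ℓ1, w). -/

import Mathlib

/-- Finitely supported elements of `ℓ¹`, with the `ℓ¹`-norm. -/
noncomputable def l10 : Submodule ℝ (lp (fun _ : ℕ => ℝ) 1) where
  carrier := {f | (Function.support (⇑f : ℕ → ℝ)).Finite}
  zero_mem' := by
    have : (Function.support (⇑(0 : lp (fun _ : ℕ => ℝ) 1) : ℕ → ℝ)) = ∅ := by
      rw [lp.coeFn_zero]; exact Function.support_zero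
    change (Function.support (⇑(0 : lp (fun _ : ℕ => ℝ) 1) : ℕ → ℝ)).Finite
    rw [this]; exact Set.finite_empty
  add_mem' := by
    intro a b ha hb
    refine Set.Finite.subset (ha.union hb) ?_
    intro n hn
    simp only [Set.mem_setOf_eq, Function.mem_support, lp.coeFn_add, Pi.add_apply] at hn
    by_contra h
    simp only [Set.mem_union, Function.mem_support, not_or, not_not] at h
    exact hn (by rw [h.1, h.2, add_zero])
  smul_mem' := by
    intro c a ha
    refine ha.subset ?_
    intro n hn
    simp only [Function.mem_support, lp.coeFn_smul, Pi.smul_apply, smul_eq_mul] at hn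
    exact Function.mem_support.2 fun h => hn (by rw [h, mul_zero])

/-- The canonical map `ℓ¹⁰ → X` determined by a sequence `x`. -/
noncomputable def T0 (X : Type*) [AddCommGroup X] [Module ℝ X] (x : ℕ → X) (a : l10) : X :=
  ∑ᶠ n, ((a : lp (fun _ : ℕ => ℝ) 1) : ℕ → ℝ) n • x n

/-- `x` is an ℓ¹-sequence: `T0` is an isomorphism (a homeomorphic embedding) onto its image. -/
def IsL1Sequence (X : Type*) [AddCommGroup X] [Module ℝ X] [TopologicalSpace X]
    (x : ℕ → X) : Prop :=
  Topology.IsEmbedding (T0 X x)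

noncomputable abbrev L1w := WeakSpace ℝ (lp (fun _ : ℕ => ℝ) 1)

/-- The canonical basis of ℓ¹, viewed in the weak space. -/
noncomputable def e (n : ℕ) : L1w :=
  (show lp (fun _ : ℕ => ℝ) 1 from lp.single 1 n (1 : ℝ))

/-! ### Auxiliary material -/

noncomputable abbrev L1X := lp (fun _ : ℕ => ℝ) 1

lemma supp_fin {X : Type*} [AddCommGroup X] [Module ℝ X] (x : ℕ → X) (a : l10) :
    (Function.support fun n => ((a : lp (fun _ : ℕ => ℝ) 1) : ℕ → ℝ) n • x n).Finite := by
  refine a.2.subset ?_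
  intro n hn
  simp only [Function.mem_support] at hn ⊢
  exact fun h => hn (by rw [h, zero_smul])

/-- `T0` as a linear map. -/
noncomputable def T0lin (X : Type*) [AddCommGroup X] [Module ℝ X] (x : ℕ → X) :
    l10 →ₗ[ℝ] X where
  toFun a := ∑ᶠ n, ((a : lp (fun _ : ℕ => ℝ) 1) : ℕ → ℝ) n • x n
  map_add' a b := by
    have h1 : ⇑((↑(a + b) : lp (fun _ : ℕ => ℝ) 1)) =
        ⇑(↑a : lp (fun _ : ℕ => ℝ) 1) + ⇑(↑b : lp (fun _ : ℕ => ℝ) 1) := by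
      rw [Submodule.coe_add, lp.coeFn_add]
    simp only [h1, Pi.add_apply, add_smul]
    exact finsum_add_distrib (supp_fin x a) (supp_fin x b)
  map_smul' c a := by
    have h1 : ⇑((↑(c • a) : lp (fun _ : ℕ => ℝ) 1)) = c • ⇑(↑a : lp (fun _ : ℕ => ℝ) 1) := by
      rw [Submodule.coe_smul, lp.coeFn_smul]
    simp only [h1, Pi.smul_apply, RingHom.id_apply, smul_eq_mul]
    rw [smul_finsum' c (supp_fin x a)]
    congr 1; ext n; rw [smul_smul]

lemma T0_eq (X : Type*) [AddCommGroup X] [Module ℝ X] (x : ℕ → X) :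
    T0 X x = ⇑(T0lin X x) := rfl

/-- Evaluation of a finitely supported sequence at a coordinate, as a linear map. -/
noncomputable def evL (j : ℕ) : l10 →ₗ[ℝ] ℝ where
  toFun a := ((a : lp (fun _ : ℕ => ℝ) 1) : ℕ → ℝ) j
  map_add' a b := by
    show ((((a + b : l10) : lp (fun _ : ℕ => ℝ) 1)) : ℕ → ℝ) j = _
    rw [Submodule.coe_add, lp.coeFn_add]; rfl
  map_smul' c a := by
    show ((((c • a : l10) : lp (fun _ : ℕ => ℝ) 1)) : ℕ → ℝ) j = _
    rw [Submodule.coe_smul, lp.coeFn_smul]; rfl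

/-- The canonical unit vectors as elements of `l10`. -/
noncomputable def sgl (i : ℕ) : l10 :=
  ⟨lp.single 1 i (1 : ℝ), by
    refine (Set.finite_singleton i).subset ?_
    intro j hj
    simp only [Function.mem_support] at hj
    by_contra h
    exact hj (lp.single_apply_ne 1 i 1 (by simpa using h))⟩

lemma evL_sgl (j i : ℕ) : evL j (sgl i) = if j = i then 1 else 0 := by
  rcases eq_or_ne j i with h | h
  · subst h; simp [evL, sgl, lp.single_apply_self]
  · simp [evL, sgl, lp.single_apply_ne 1 i 1 h, h]

open Classical in
/-- The indicator of the "even-indexed" part of the subsequence. -/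
noncomputable def gfun (k : ℕ → ℕ) : ℕ → ℝ :=
  fun n => if ∃ j, Even j ∧ k j = n then 1 else 0

lemma gfun_abs_le (k : ℕ → ℕ) (n : ℕ) : ‖gfun k n‖ ≤ 1 := by
  unfold gfun; split_ifs <;> simp

lemma norm_summable (f : L1X) : Summable fun n => ‖f n‖ := by
  have := Memℓp.summable (p := 1) (by norm_num) (lp.memℓp f)
  simpa using this

lemma norm_tsum_f (f : L1X) : ∑' n, ‖f n‖ = ‖f‖ := by
  have := lp.hasSum_norm (p := 1) (by norm_num) f
  simp only [ENNReal.toReal_one, Real.rpow_one] at this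
  exact this.tsum_eq

lemma g_mul_summable (k : ℕ → ℕ) (f : L1X) : Summable fun n => gfun k n * f n := by
  refine Summable.of_norm_bounded (norm_summable f) ?_
  intro n
  rw [norm_mul]
  calc ‖gfun k n‖ * ‖f n‖ ≤ 1 * ‖f n‖ :=
        mul_le_mul_of_nonneg_right (gfun_abs_le k n) (norm_nonneg _)
    _ = ‖f n‖ := one_mul _

/-- The functional `f ↦ ∑ gfun k n * f n` as a linear map on `ℓ¹`. -/
noncomputable def phi0 (k : ℕ → ℕ) : L1X →ₗ[ℝ] ℝ where
  toFun f := ∑' n, gfun k n * f n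
  map_add' f g := by
    dsimp only
    have h1 : (fun n => gfun k n * (f + g) n) =
        fun n => gfun k n * f n + gfun k n * g n := by
      funext n; rw [lp.coeFn_add]; simp [mul_add]
    rw [h1]
    exact Summable.tsum_add (g_mul_summable k f) (g_mul_summable k g)
  map_smul' c f := by
    dsimp only
    have h1 : (fun n => gfun k n * (c • f) n) = fun n => c * (gfun k n * f n) := by
      funext n; rw [lp.coeFn_smul]; simp; ring
    simp only [RingHom.id_apply, smul_eq_mul]
    rw [h1, tsum_mul_left]

lemma phi0_bound (k : ℕ → ℕ) (f : L1X) : ‖phi0 k f‖ ≤ 1 * ‖f‖ := by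
  have hsum : Summable fun n => ‖gfun k n * f n‖ := by
    refine Summable.of_nonneg_of_le (fun n => norm_nonneg _) ?_ (norm_summable f)
    intro n
    rw [norm_mul]
    calc ‖gfun k n‖ * ‖f n‖ ≤ 1 * ‖f n‖ :=
          mul_le_mul_of_nonneg_right (gfun_abs_le k n) (norm_nonneg _)
      _ = ‖f n‖ := one_mul _
  calc ‖phi0 k f‖ ≤ ∑' n, ‖gfun k n * f n‖ := norm_tsum_le_tsum_norm hsum
    _ ≤ ∑' n, ‖f n‖ := by
        refine Summable.tsum_le_tsum ?_ hsum (norm_summable f)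
        intro n
        rw [norm_mul]
        calc ‖gfun k n‖ * ‖f n‖ ≤ 1 * ‖f n‖ :=
              mul_le_mul_of_nonneg_right (gfun_abs_le k n) (norm_nonneg _)
          _ = ‖f n‖ := one_mul _
    _ = ‖f‖ := norm_tsum_f f
    _ ≤ 1 * ‖f‖ := by rw [one_mul]

/-- The functional, as a continuous linear map on `ℓ¹`. -/
noncomputable def phiC (k : ℕ → ℕ) : L1X →L[ℝ] ℝ :=
  (phi0 k).mkContinuous 1 (phi0_bound k)

/-- Any norm-continuous functional is continuous for the weak topology. -/
noncomputable def weaken (φ : L1X →L[ℝ] ℝ) : WeakSpace ℝ L1X →L[ℝ] ℝ :=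
  { φ.toLinearMap with
    cont := WeakBilin.eval_continuous ((topDualPairing ℝ L1X).flip) φ }

lemma weaken_apply (φ : L1X →L[ℝ] ℝ) (z : WeakSpace ℝ L1X) : weaken φ z = φ z := rfl

lemma phiC_single (k : ℕ → ℕ) (hk : StrictMono k) (j : ℕ) :
    phiC k (lp.single 1 (k j) (1 : ℝ)) = if Even j then 1 else 0 := by
  have h1 : phiC k (lp.single 1 (k j) (1 : ℝ)) =
      ∑' n, gfun k n * (lp.single 1 (k j) (1:ℝ) : L1X) n := rfl
  rw [h1]
  have h2 : ∑' n, gfun k n * (lp.single 1 (k j) (1:ℝ) : L1X) n =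
      gfun k (k j) * (lp.single 1 (k j) (1:ℝ) : L1X) (k j) := by
    refine tsum_eq_single (k j) ?_
    intro n hn
    rw [lp.single_apply_ne 1 (k j) 1 hn, mul_zero]
  rw [h2, lp.single_apply_self, mul_one]
  unfold gfun
  split_ifs with h hev hev
  · rfl
  · obtain ⟨j', hj', heq⟩ := h
    exact absurd (hk.injective heq ▸ hj') hev
  · exact absurd ⟨j, hev, rfl⟩ h
  · rfl

open Filter Topology in
theorem stmt15 (k : ℕ → ℕ) (hk : StrictMono k) :
    (¬ ∀ φ : L1w →L[ℝ] ℝ, ∃ r : ℝ,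
        Filter.Tendsto (fun j => φ (e (k j))) Filter.atTop (nhds r)) ∧
      ¬ IsL1Sequence L1w (e ∘ k) := by
  constructor
  · -- no weakly Cauchy subsequence
    intro hall
    obtain ⟨r, hr⟩ := hall (weaken (phiC k))
    have hval : ∀ j, weaken (phiC k) (e (k j)) = if Even j then 1 else 0 := fun j => by
      rw [weaken_apply]
      exact phiC_single k hk j
    have heven : Tendsto (fun j : ℕ => weaken (phiC k) (e (k (2 * j)))) atTop (𝓝 r) :=
      hr.comp (tendsto_atTop_mono (fun j => by simp only [id_eq]; omega) tendsto_id)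
    have hodd : Tendsto (fun j : ℕ => weaken (phiC k) (e (k (2 * j + 1)))) atTop (𝓝 r) :=
      hr.comp (tendsto_atTop_mono (fun j => by simp only [id_eq]; omega) tendsto_id)
    have he : (fun j : ℕ => weaken (phiC k) (e (k (2 * j)))) = fun _ => (1 : ℝ) := by
      funext j; rw [hval]; simp [Nat.even_mul]
    have ho : (fun j : ℕ => weaken (phiC k) (e (k (2 * j + 1)))) = fun _ => (0 : ℝ) := by
      funext j; rw [hval]; simp [Nat.even_add_one, Nat.even_mul]
    rw [he] at heven
    rw [ho] at hodd
    have h1 : r = 1 := tendsto_nhds_unique heven tendsto_const_nhds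
    have h0 : r = 0 := tendsto_nhds_unique hodd tendsto_const_nhds
    exact one_ne_zero (h1 ▸ h0)
  · -- not an ℓ¹-sequence
    intro h
    replace h : Topology.IsEmbedding (T0 L1w (e ∘ k)) := h
    set x : ℕ → L1w := e ∘ k with hx
    set B := (topDualPairing ℝ L1X).flip with hB
    set ι := fun (z : L1w) (φ : L1X →L[ℝ] ℝ) => B z φ with hι
    have hz : T0 L1w x 0 = 0 := by rw [T0_eq]; exact map_zero _
    have hnhds : 𝓝 (0 : l10) = Filter.comap (T0 L1w x) (𝓝 (0 : L1w)) := by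
      rw [h.toIsInducing.nhds_eq_comap, hz]
    have hw : (𝓝 (0 : L1w)) = Filter.comap ι (𝓝 (ι 0)) := nhds_induced ι 0
    have hι0 : ι 0 = fun _ => (0 : ℝ) := by
      funext φ
      show B 0 φ = 0
      rw [map_zero B]; rfl
    have hb : Metric.ball (0 : l10) 1 ∈
        Filter.comap (ι ∘ T0 L1w x) (Filter.pi fun _ : L1X →L[ℝ] ℝ => 𝓝 (0 : ℝ)) := by
      have := Metric.ball_mem_nhds (0 : l10) one_pos
      rw [hnhds, hw, hι0, nhds_pi, Filter.comap_comap] at this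
      exact this
    obtain ⟨S, hS, hsub⟩ := Filter.mem_comap.mp hb
    obtain ⟨I, hIfin, U, hU, hUsub⟩ := Filter.mem_pi.mp hS
    haveI : Fintype ↥I := hIfin.fintype
    set m := Fintype.card ↥I with hm
    -- the linear map (Fin (m+1) → ℝ) → l10 sending coefficients to combinations of unit vectors
    set G : (Fin (m + 1) → ℝ) →ₗ[ℝ] l10 :=
      Fintype.linearCombination ℝ (fun i : Fin (m + 1) => sgl (i : ℕ)) with hG
    set F : (Fin (m + 1) → ℝ) →ₗ[ℝ] (↥I → ℝ) :=
      LinearMap.pi (fun φ : ↥I =>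
        ((topDualPairing ℝ L1X φ.1).comp ((T0lin L1w x).comp G))) with hF
    have hninj : ¬ Function.Injective F := by
      intro hinj
      have hle := LinearMap.finrank_le_finrank_of_injective hinj
      rw [Module.finrank_pi, Module.finrank_pi] at hle
      simp [Fintype.card_fin] at hle
      rw [← Nat.card_coe_set_eq, Nat.card_eq_fintype_card] at hle
      exact lt_irrefl _ hle
    obtain ⟨c₁, c₂, hFeq, hne⟩ := Function.not_injective_iff.mp hninj
    set c := c₁ - c₂ with hc
    have hc0 : c ≠ 0 := sub_ne_zero.mpr hne
    have hFc : F c = 0 := by rw [hc, map_sub, hFeq, sub_self]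
    set b := G c with hbdef
    have hb0 : b ≠ 0 := by
      obtain ⟨i₀, hi₀⟩ : ∃ i, c i ≠ 0 := by
        by_contra h'
        push_neg at h'
        exact hc0 (funext h')
      intro hb'
      apply hi₀
      have hev : evL (i₀ : ℕ) b = 0 := by rw [hb', map_zero]
      have hGc : b = ∑ i : Fin (m + 1), c i • sgl (i : ℕ) := by
        rw [hbdef, hG, Fintype.linearCombination_apply]
      rw [hGc, map_sum] at hev
      have : ∀ i : Fin (m + 1), evL (i₀ : ℕ) (c i • sgl (i : ℕ)) =
          if i₀ = i then c i else 0 := by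
        intro i
        rw [map_smul, evL_sgl, smul_eq_mul]
        rcases eq_or_ne i₀ i with hi | hi
        · subst hi; simp
        · have : (i₀ : ℕ) ≠ (i : ℕ) := fun hcc => hi (Fin.val_injective hcc)
          simp [this, hi]
      rw [Finset.sum_congr rfl (fun i _ => this i)] at hev
      rwa [Finset.sum_ite_eq Finset.univ i₀ c, if_pos (Finset.mem_univ i₀)] at hev
    have hbn : (0 : ℝ) < ‖b‖ := norm_pos_iff.mpr hb0
    set t : ℝ := 2 / ‖b‖ with ht
    have hmem : (t • b) ∈ Metric.ball (0 : l10) 1 := by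
      apply hsub
      refine Set.mem_preimage.mpr (hUsub ?_)
      intro φ hφ
      show ι (T0 L1w x (t • b)) φ ∈ U φ
      have h0 : ι (T0 L1w x (t • b)) φ = 0 := by
        have h1 : T0 L1w x (t • b) = t • T0 L1w x b := by
          rw [T0_eq]; exact map_smul _ _ _
        have h2 : ι (T0 L1w x b) φ = F c ⟨φ, hφ⟩ := rfl
        have h3 : F c ⟨φ, hφ⟩ = 0 := by rw [hFc]; rfl
        show B (T0 L1w x (t • b)) φ = 0
        erw [h1, map_smul B, LinearMap.smul_apply]
        have : B (T0 L1w x b) φ = 0 := h2.trans h3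
        rw [this, smul_zero]
      rw [h0]
      exact mem_of_mem_nhds (hU φ)
    have : ‖t • b‖ < 1 := by
      have := Metric.mem_ball.mp hmem
      rwa [dist_zero_right] at this
    rw [norm_smul, Real.norm_eq_abs, ht, abs_of_pos (by positivity),
      div_mul_cancel₀ _ (ne_of_gt hbn)] at this
    linarith
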